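/- Let x = (X₁,Y₁,X₂,Y₂) ∈ ℂ⁴ satisfy X₁ ≠ X₂, Y₁² = Q(X₁) and Y₂² = Q(X₂). Then, with u₂, u₄, u₅, u₇ regarded as functions on the open set {X₁ ≠ X₂} ⊂ ℂ⁴, the following hold at x: (𝓛₃*u₂)(x) = −u₅(x); (𝓛₃*u₄)(x) = −2u₇(x); (𝓛₃*u₅)(x) = −35u₂⁴ − 42u₂²u₄ − 3u₄² − 2y₄(5u₂² + u₄) + 4y₆u₂ − y₈ evaluated at x; (𝓛₃*u₇)(x) = −7(3u₂⁵ + 10u₂³u₄ + 3u₂u₄²) − 10y₄(u₂³ + u₂u₄) + 2y₆(3u₂² + u₄) − 3y₈u₂ + y₁₀ evaluated at x. -/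

import Mathlib

/- Context: ℂ⁴ is modelled as `Fin 4 → ℂ` with coordinates 0 ↦ X₁, 1 ↦ Y₁, 2 ↦ X₂,
3 ↦ Y₂.  `pd i f x` is the complex partial derivative of `f` along the `i`-th
coordinate direction.  Q(X) = X⁷ + y₄X⁵ − y₆X⁴ + y₈X³ − y₁₀X² + y₁₂X − y₁₄,
Q'(X) = 7X⁶ + 5y₄X⁴ − 4y₆X³ + 3y₈X² − 2y₁₀X + y₁₂. -/

noncomputable section

/-- Complex partial derivative along the `i`-th coordinate direction. -/
def pd (i : Fin 4) (f : (Fin 4 → ℂ) → ℂ) (x : Fin 4 → ℂ) : ℂ :=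
  fderiv ℂ f x (Pi.single i 1)

def Qf (y4 y6 y8 y10 y12 y14 X : ℂ) : ℂ :=
  X ^ 7 + y4 * X ^ 5 - y6 * X ^ 4 + y8 * X ^ 3 - y10 * X ^ 2 + y12 * X - y14

def Qd (y4 y6 y8 y10 y12 X : ℂ) : ℂ :=
  7 * X ^ 6 + 5 * y4 * X ^ 4 - 4 * y6 * X ^ 3 + 3 * y8 * X ^ 2 - 2 * y10 * X + y12

/-- `D₁ f = 2Y₁·∂f/∂X₁ + Q'(X₁)·∂f/∂Y₁`. -/
def D1 (y4 y6 y8 y10 y12 : ℂ) (f : (Fin 4 → ℂ) → ℂ) (x : Fin 4 → ℂ) : ℂ :=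
  2 * x 1 * pd 0 f x + Qd y4 y6 y8 y10 y12 (x 0) * pd 1 f x

/-- `D₂ f = 2Y₂·∂f/∂X₂ + Q'(X₂)·∂f/∂Y₂`. -/
def D2 (y4 y6 y8 y10 y12 : ℂ) (f : (Fin 4 → ℂ) → ℂ) (x : Fin 4 → ℂ) : ℂ :=
  2 * x 3 * pd 2 f x + Qd y4 y6 y8 y10 y12 (x 2) * pd 3 f x

/-- `𝓛₃* f = (D₂f − D₁f)/(X₁ − X₂)`. -/
def L3 (y4 y6 y8 y10 y12 : ℂ) (f : (Fin 4 → ℂ) → ℂ) (x : Fin 4 → ℂ) : ℂ :=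
  (D2 y4 y6 y8 y10 y12 f x - D1 y4 y6 y8 y10 y12 f x) / (x 0 - x 2)

def u2f (x : Fin 4 → ℂ) : ℂ := (x 0 + x 2) / 2
def u4f (x : Fin 4 → ℂ) : ℂ := (x 0 - x 2) ^ 2 / 4
def u5f (x : Fin 4 → ℂ) : ℂ := (x 1 - x 3) / (x 0 - x 2)
def u7f (x : Fin 4 → ℂ) : ℂ := (x 1 + x 3) / 2

set_option maxHeartbeats 1000000 in
/-- At any point of the curve-square with `X₁ ≠ X₂`, the derivation `𝓛₃*` acts on
`u₂, u₄, u₅, u₇` by the stated polynomial formulas. -/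
theorem statement9 (y4 y6 y8 y10 y12 y14 : ℂ) (x : Fin 4 → ℂ)
    (hx : x 0 ≠ x 2)
    (h1 : (x 1) ^ 2 = Qf y4 y6 y8 y10 y12 y14 (x 0))
    (h2 : (x 3) ^ 2 = Qf y4 y6 y8 y10 y12 y14 (x 2)) :
    L3 y4 y6 y8 y10 y12 u2f x = -(u5f x) ∧
    L3 y4 y6 y8 y10 y12 u4f x = -2 * u7f x ∧
    L3 y4 y6 y8 y10 y12 u5f x =
      -35 * (u2f x) ^ 4 - 42 * (u2f x) ^ 2 * u4f x - 3 * (u4f x) ^ 2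
        - 2 * y4 * (5 * (u2f x) ^ 2 + u4f x) + 4 * y6 * u2f x - y8 ∧
    L3 y4 y6 y8 y10 y12 u7f x =
      -7 * (3 * (u2f x) ^ 5 + 10 * (u2f x) ^ 3 * u4f x + 3 * u2f x * (u4f x) ^ 2)
        - 10 * y4 * ((u2f x) ^ 3 + u2f x * u4f x)
        + 2 * y6 * (3 * (u2f x) ^ 2 + u4f x) - 3 * y8 * u2f x + y10 := by
  have hx' : x 0 - x 2 ≠ 0 := sub_ne_zero.2 hx
  have hp : ∀ j : Fin 4, HasFDerivAt (fun x : Fin 4 → ℂ => x j)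
      (ContinuousLinearMap.proj j : (Fin 4 → ℂ) →L[ℂ] ℂ) x :=
    fun j => hasFDerivAt_apply j x
  have e2 : u2f = fun x : Fin 4 → ℂ => (x 0 + x 2) * (2:ℂ)⁻¹ := by
    funext y; exact div_eq_mul_inv _ _
  have e4 : u4f = fun x : Fin 4 → ℂ => ((x 0 - x 2) * (x 0 - x 2)) * (4:ℂ)⁻¹ := by
    funext y; rw [u4f, sq, div_eq_mul_inv]
  have e5 : u5f = fun x : Fin 4 → ℂ => (x 1 - x 3) * (x 0 - x 2)⁻¹ := by
    funext y; exact div_eq_mul_inv _ _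
  have e7 : u7f = fun x : Fin 4 → ℂ => (x 1 + x 3) * (2:ℂ)⁻¹ := by
    funext y; exact div_eq_mul_inv _ _
  have h2f := (((hp 0).add (hp 2)).mul_const ((2:ℂ)⁻¹))
  have h4f := ((((hp 0).sub (hp 2)).mul ((hp 0).sub (hp 2))).mul_const ((4:ℂ)⁻¹))
  have hinv := (hasFDerivAt_inv' (𝕜 := ℂ) hx').comp x ((hp 0).sub (hp 2))
  have h5f : HasFDerivAt (fun y : Fin 4 → ℂ => (y 1 - y 3) * (y 0 - y 2)⁻¹) _ x :=
    ((hp 1).sub (hp 3)).mul hinv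
  have h7f := (((hp 1).add (hp 3)).mul_const ((2:ℂ)⁻¹))
  have p2 : ∀ i, pd i u2f x =
      ((Pi.single i 1 : Fin 4 → ℂ) 0 + (Pi.single i 1 : Fin 4 → ℂ) 2)/2 := by
    intro i
    rw [pd, e2, HasFDerivAt.fderiv (f := fun x : Fin 4 → ℂ => (x 0 + x 2) * (2:ℂ)⁻¹) h2f]
    simp [div_eq_mul_inv]; ring
  have p4 : ∀ i, pd i u4f x =
      (2*(x 0 - x 2)*((Pi.single i 1 : Fin 4 → ℂ) 0 - (Pi.single i 1 : Fin 4 → ℂ) 2))/4 := by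
    intro i
    rw [pd, e4, HasFDerivAt.fderiv (f := fun x : Fin 4 → ℂ => ((x 0 - x 2) * (x 0 - x 2)) * (4:ℂ)⁻¹) h4f]
    simp [div_eq_mul_inv]
    ring
  have p5 : ∀ i, pd i u5f x =
      ((x 0 - x 2)*((Pi.single i 1 : Fin 4 → ℂ) 1 - (Pi.single i 1 : Fin 4 → ℂ) 3)
      - (x 1 - x 3)*((Pi.single i 1 : Fin 4 → ℂ) 0 - (Pi.single i 1 : Fin 4 → ℂ) 2))
      /(x 0 - x 2)^2 := by
    intro i
    rw [pd, e5, h5f.fderiv]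
    simp [div_eq_mul_inv, ContinuousLinearMap.mulLeftRight_apply]
    field_simp
    ring
  have p7 : ∀ i, pd i u7f x =
      ((Pi.single i 1 : Fin 4 → ℂ) 1 + (Pi.single i 1 : Fin 4 → ℂ) 3)/2 := by
    intro i
    rw [pd, e7, HasFDerivAt.fderiv (f := fun x : Fin 4 → ℂ => (x 1 + x 3) * (2:ℂ)⁻¹) h7f]
    simp [div_eq_mul_inv]; ring
  refine ⟨?_, ?_, ?_, ?_⟩
  · rw [L3, D1, D2, p2 0, p2 1, p2 2, p2 3, u5f]
    simp [Pi.single_apply]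
    field_simp
    ring
  · rw [L3, D1, D2, p4 0, p4 1, p4 2, p4 3, u7f]
    simp [Pi.single_apply]
    field_simp
    ring
  · rw [L3, D1, D2, p5 0, p5 1, p5 2, p5 3, u2f, u4f]
    simp [Pi.single_apply]
    rw [Qf] at h1 h2
    rw [Qd, Qd]
    field_simp
    linear_combination (512:ℂ)*(h1-h2)
  · rw [L3, D1, D2, p7 0, p7 1, p7 2, p7 3, u2f, u4f]
    simp [Pi.single_apply]
    rw [Qd, Qd]
    field_simp
    ring

end
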